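/- For all integers k, l, m, n: (1) D_4(2k,2l,2m,2n) is 2^4 times an odd integer if k+m ≢ l+n (mod 2), and is divisible by 2^8 if k+m ≡ l+n (mod 2); (2) D_4(2k+1,2l+1,2m+1,2n+1) is 2^4 times an odd integer if k+m ≢ l+n (mod 2), is 2^7 times an odd integer if (k+m)(l+n) ≡ −1 (mod 4), and is divisible by 2^9 otherwise; (3) D_4(2k,2l+1,2m,2n+1) is 2^5 times an odd integer if k−m ≡ l−n ≡ 1 (mod 2), is 2^6 times an odd integer if k ≡ m (mod 2) and (2k+2l+1)(2m+2n+1) ≡ ±3 (mod 8), and is divisible by 2^7 otherwise; (4) D_4(2k,2l,2m+1,2n+1) is 2^4 times an odd integer if (2k+2m+1)(2l+2n+1) ≡ ±3 (mod 8), and is divisible by 2^5 if (2k+2m+1)(2l+2n+1) ≡ ±1 (mod 8). -/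

import Mathlib

open Matrix Complex

def D4 (x0 x1 x2 x3 : ℤ) : ℤ :=
  (Matrix.of ![![x0, x1, x2, x3], ![x3, x0, x1, x2], ![x2, x3, x0, x1], ![x1, x2, x3, x0]]).det

lemma D4_eq (a b c d : ℤ) : D4 a b c d = (a+b+c+d)*(a-b+c-d)*((a-c)^2+(b-d)^2) := by
  simp [D4, Matrix.det_succ_row_zero, Fin.sum_univ_succ]
  simp [Fin.succAbove, Fin.lt_def]
  ring

lemma odd_sq_add_sq (x y : ℤ) (h : Odd (x + y)) : Odd (x^2 + y^2) := by
  have h2 : x^2+y^2 = (x+y)*(x+y) - 2*(x*y) := by ring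
  rw [h2]; exact (h.mul h).sub_even (even_two_mul (x*y))

theorem stmt7 (k l m n : ℤ) :
    ((¬ (k + m ≡ l + n [ZMOD 2]) →
        ∃ t : ℤ, Odd t ∧ D4 (2 * k) (2 * l) (2 * m) (2 * n) = 2 ^ 4 * t) ∧
      ((k + m ≡ l + n [ZMOD 2]) → (2 ^ 8 : ℤ) ∣ D4 (2 * k) (2 * l) (2 * m) (2 * n))) ∧
    ((¬ (k + m ≡ l + n [ZMOD 2]) →
        ∃ t : ℤ, Odd t ∧ D4 (2 * k + 1) (2 * l + 1) (2 * m + 1) (2 * n + 1) = 2 ^ 4 * t) ∧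
      (((k + m) * (l + n) ≡ -1 [ZMOD 4]) →
        ∃ t : ℤ, Odd t ∧ D4 (2 * k + 1) (2 * l + 1) (2 * m + 1) (2 * n + 1) = 2 ^ 7 * t) ∧
      ((k + m ≡ l + n [ZMOD 2]) → ¬ ((k + m) * (l + n) ≡ -1 [ZMOD 4]) →
        (2 ^ 9 : ℤ) ∣ D4 (2 * k + 1) (2 * l + 1) (2 * m + 1) (2 * n + 1))) ∧
    (((k - m ≡ 1 [ZMOD 2] ∧ l - n ≡ 1 [ZMOD 2]) →
        ∃ t : ℤ, Odd t ∧ D4 (2 * k) (2 * l + 1) (2 * m) (2 * n + 1) = 2 ^ 5 * t) ∧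
      ((k ≡ m [ZMOD 2] ∧
          ((2 * k + 2 * l + 1) * (2 * m + 2 * n + 1) ≡ 3 [ZMOD 8] ∨
            (2 * k + 2 * l + 1) * (2 * m + 2 * n + 1) ≡ -3 [ZMOD 8])) →
        ∃ t : ℤ, Odd t ∧ D4 (2 * k) (2 * l + 1) (2 * m) (2 * n + 1) = 2 ^ 6 * t) ∧
      (¬ (k - m ≡ 1 [ZMOD 2] ∧ l - n ≡ 1 [ZMOD 2]) →
        ¬ (k ≡ m [ZMOD 2] ∧
            ((2 * k + 2 * l + 1) * (2 * m + 2 * n + 1) ≡ 3 [ZMOD 8] ∨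
              (2 * k + 2 * l + 1) * (2 * m + 2 * n + 1) ≡ -3 [ZMOD 8])) →
        (2 ^ 7 : ℤ) ∣ D4 (2 * k) (2 * l + 1) (2 * m) (2 * n + 1))) ∧
    ((((2 * k + 2 * m + 1) * (2 * l + 2 * n + 1) ≡ 3 [ZMOD 8] ∨
          (2 * k + 2 * m + 1) * (2 * l + 2 * n + 1) ≡ -3 [ZMOD 8]) →
        ∃ t : ℤ, Odd t ∧ D4 (2 * k) (2 * l) (2 * m + 1) (2 * n + 1) = 2 ^ 4 * t) ∧
      (((2 * k + 2 * m + 1) * (2 * l + 2 * n + 1) ≡ 1 [ZMOD 8] ∨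
          (2 * k + 2 * m + 1) * (2 * l + 2 * n + 1) ≡ -1 [ZMOD 8]) →
        (2 ^ 5 : ℤ) ∣ D4 (2 * k) (2 * l) (2 * m + 1) (2 * n + 1))) := by
  refine ⟨⟨?_, ?_⟩, ⟨?_, ?_, ?_⟩, ⟨?_, ?_, ?_⟩, ?_, ?_⟩
  · -- 1a
    intro h
    have h' : ¬ ((k+m) % 2 = (l+n) % 2) := h
    refine ⟨(k+m+l+n) * (k+m-l-n) * ((k-m)^2 + (l-n)^2), ?_, by rw [D4_eq]; ring⟩
    have o1 : Odd (k+m+l+n) := Int.odd_iff.mpr (by omega)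
    have o2 : Odd (k+m-l-n) := Int.odd_iff.mpr (by omega)
    have o3 : Odd ((k-m)^2+(l-n)^2) := odd_sq_add_sq _ _ (Int.odd_iff.mpr (by omega))
    exact (o1.mul o2).mul o3
  · -- 1b
    intro h
    have h' : (k+m) % 2 = (l+n) % 2 := h
    rcases Int.emod_two_eq (k+m) with h0 | h0
    · obtain ⟨a, c, rfl, rfl⟩ : ∃ a c, k = a + c ∧ m = a - c :=
        ⟨(k+m)/2, (k-m)/2, by omega, by omega⟩
      obtain ⟨b, d, rfl, rfl⟩ : ∃ b d, l = b + d ∧ n = b - d :=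
        ⟨(l+n)/2, (l-n)/2, by omega, by omega⟩
      exact ⟨(a+b)*(a-b)*(c^2+d^2), by rw [D4_eq]; ring⟩
    · obtain ⟨a, c, rfl, rfl⟩ : ∃ a c, k = a + c + 1 ∧ m = a - c :=
        ⟨(k+m-1)/2, (k-m-1)/2, by omega, by omega⟩
      obtain ⟨b, d, rfl, rfl⟩ : ∃ b d, l = b + d + 1 ∧ n = b - d :=
        ⟨(l+n-1)/2, (l-n-1)/2, by omega, by omega⟩
      rcases Int.emod_two_eq (a - b) with h1 | h1
      · obtain ⟨e, rfl⟩ : ∃ e, a = b + 2*e := ⟨(a-b)/2, by omega⟩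
        exact ⟨e*(2*b+2*e+1)*(2*c^2+2*c+2*d^2+2*d+1), by rw [D4_eq]; ring⟩
      · obtain ⟨e, rfl⟩ : ∃ e, a = b + 2*e + 1 := ⟨(a-b-1)/2, by omega⟩
        exact ⟨(b+e+1)*(2*e+1)*(2*c^2+2*c+2*d^2+2*d+1), by rw [D4_eq]; ring⟩
  · -- 2a
    intro h
    have h' : ¬ ((k+m) % 2 = (l+n) % 2) := h
    refine ⟨(k+m+l+n+2) * (k+m-l-n) * ((k-m)^2 + (l-n)^2), ?_, by rw [D4_eq]; ring⟩
    have o1 : Odd (k+m+l+n+2) := Int.odd_iff.mpr (by omega)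
    have o2 : Odd (k+m-l-n) := Int.odd_iff.mpr (by omega)
    have o3 : Odd ((k-m)^2+(l-n)^2) := odd_sq_add_sq _ _ (Int.odd_iff.mpr (by omega))
    exact (o1.mul o2).mul o3
  · -- 2b
    intro h
    obtain ⟨X, hX⟩ : ∃ X, (k+m) * (l+n) = X := ⟨_, rfl⟩
    have h' : X % 4 = (-1) % 4 := by rw [← hX]; exact h
    have hodd : Odd ((k+m)*(l+n)) := by rw [Int.odd_iff, hX]; omega
    obtain ⟨h1, h2⟩ := Int.odd_mul.mp hodd
    rw [Int.odd_iff] at h1 h2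
    obtain ⟨a, c, rfl, rfl⟩ : ∃ a c, k = a + c + 1 ∧ m = a - c :=
      ⟨(k+m-1)/2, (k-m-1)/2, by omega, by omega⟩
    obtain ⟨b, d, rfl, rfl⟩ : ∃ b d, l = b + d + 1 ∧ n = b - d :=
      ⟨(l+n-1)/2, (l-n-1)/2, by omega, by omega⟩
    obtain ⟨R, hR⟩ : ∃ R, X = 4*R + 2*(a+b) + 1 := ⟨a*b, by rw [← hX]; ring⟩
    have hab : (a+b) % 2 = 1 := by omega
    obtain ⟨e, rfl⟩ : ∃ e, a = 2*e + 1 - b := ⟨(a+b-1)/2, by omega⟩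
    refine ⟨(2*e+3)*(2*e+1-2*b)*(2*c^2+2*c+2*d^2+2*d+1), ?_, by rw [D4_eq]; ring⟩
    exact Odd.mul (Odd.mul (⟨e+1, by ring⟩ : Odd ((2*e+3))) ⟨e-b, by ring⟩) ⟨c^2+c+d^2+d, by ring⟩
  · -- 2c
    intro h1 h2
    have h1' : (k+m) % 2 = (l+n) % 2 := h1
    obtain ⟨X, hX⟩ : ∃ X, (k+m) * (l+n) = X := ⟨_, rfl⟩
    have h2' : ¬ (X % 4 = (-1) % 4) := fun hh => h2 (by rw [← hX] at hh; exact hh)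
    rcases Int.emod_two_eq (k+m) with h0 | h0
    · obtain ⟨a, c, rfl, rfl⟩ : ∃ a c, k = a + c ∧ m = a - c :=
        ⟨(k+m)/2, (k-m)/2, by omega, by omega⟩
      obtain ⟨b, d, rfl, rfl⟩ : ∃ b d, l = b + d ∧ n = b - d :=
        ⟨(l+n)/2, (l-n)/2, by omega, by omega⟩
      rcases Int.emod_two_eq (a - b) with h3 | h3
      · obtain ⟨e, rfl⟩ : ∃ e, a = b + 2*e := ⟨(a-b)/2, by omega⟩
        exact ⟨e*(2*b+2*e+1)*(c^2+d^2), by rw [D4_eq]; ring⟩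
      · obtain ⟨e, rfl⟩ : ∃ e, a = b + 2*e + 1 := ⟨(a-b-1)/2, by omega⟩
        exact ⟨(b+e+1)*(2*e+1)*(c^2+d^2), by rw [D4_eq]; ring⟩
    · obtain ⟨a, c, rfl, rfl⟩ : ∃ a c, k = a + c + 1 ∧ m = a - c :=
        ⟨(k+m-1)/2, (k-m-1)/2, by omega, by omega⟩
      obtain ⟨b, d, rfl, rfl⟩ : ∃ b d, l = b + d + 1 ∧ n = b - d :=
        ⟨(l+n-1)/2, (l-n-1)/2, by omega, by omega⟩
      obtain ⟨R, hR⟩ : ∃ R, X = 4*R + 2*(a+b) + 1 := ⟨a*b, by rw [← hX]; ring⟩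
      have hab : (a+b) % 2 = 0 := by omega
      obtain ⟨e, rfl⟩ : ∃ e, a = 2*e - b := ⟨(a+b)/2, by omega⟩
      exact ⟨(e+1)*(e-b)*(2*c^2+2*c+2*d^2+2*d+1), by rw [D4_eq]; ring⟩
  · -- 3a
    rintro ⟨ha, hb⟩
    have ha' : (k-m) % 2 = 1 % 2 := ha
    have hb' : (l-n) % 2 = 1 % 2 := hb
    obtain ⟨a, c, rfl, rfl⟩ : ∃ a c, k = a + c + 1 ∧ m = a - c :=
      ⟨(k+m-1)/2, (k-m-1)/2, by omega, by omega⟩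
    obtain ⟨b, d, rfl, rfl⟩ : ∃ b d, l = b + d + 1 ∧ n = b - d :=
      ⟨(l+n-1)/2, (l-n-1)/2, by omega, by omega⟩
    refine ⟨(2*a+2*b+3)*(2*a-2*b-1)*(2*c^2+2*c+2*d^2+2*d+1), ?_, by rw [D4_eq]; ring⟩
    exact Odd.mul (Odd.mul (⟨a+b+1, by ring⟩ : Odd ((2*a+2*b+3))) ⟨a-b-1, by ring⟩)
      ⟨c^2+c+d^2+d, by ring⟩
  · -- 3b
    rintro ⟨hkm, hP⟩
    have hkm' : k % 2 = m % 2 := hkm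
    obtain ⟨X, hX⟩ : ∃ X, (2*k+2*l+1) * (2*m+2*n+1) = X := ⟨_, rfl⟩
    have hP' : X % 8 = 3 % 8 ∨ X % 8 = (-3) % 8 := by rw [← hX]; exact hP
    obtain ⟨a, c, rfl, rfl⟩ : ∃ a c, k = a + c ∧ m = a - c :=
      ⟨(k+m)/2, (k-m)/2, by omega, by omega⟩
    rcases Int.emod_two_eq (l - n) with h0 | h0
    · -- l-n even
      obtain ⟨b, d, rfl, rfl⟩ : ∃ b d, l = b + d ∧ n = b - d :=
        ⟨(l+n)/2, (l-n)/2, by omega, by omega⟩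
      have hcd : (c + d) % 2 = 1 := by
        rcases Int.emod_two_eq (a+b+c+d) with hu | hu
        · obtain ⟨w, rfl⟩ : ∃ w, d = 2*w - a - b - c := ⟨(a+b+c+d)/2, by omega⟩
          obtain ⟨W, hW⟩ : ∃ W, X = 16*W + 4*(a+b) + 1 :=
            ⟨w*(a+b-w), by rw [← hX]; ring⟩
          omega
        · obtain ⟨w, rfl⟩ : ∃ w, d = 2*w + 1 - a - b - c := ⟨(a+b+c+d-1)/2, by omega⟩
          obtain ⟨W, hW, hWp⟩ : ∃ W, X = 4*W + 4*(a+b) + 1 ∧ W % 2 = 1 :=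
            ⟨(2*w+1)*(2*(a+b)-2*w-1), by rw [← hX]; ring,
              Int.odd_iff.mp (Odd.mul (⟨w, by ring⟩ : Odd ((2*w+1))) ⟨a+b-w-1, by ring⟩)⟩
          omega
      refine ⟨(2*a+2*b+1)*(2*a-2*b-1)*(c^2+d^2), ?_, by rw [D4_eq]; ring⟩
      exact Odd.mul (Odd.mul (⟨a+b, by ring⟩ : Odd ((2*a+2*b+1))) ⟨a-b-1, by ring⟩)
        (odd_sq_add_sq _ _ (Int.odd_iff.mpr (by omega)))
    · -- l-n odd
      obtain ⟨b, d, rfl, rfl⟩ : ∃ b d, l = b + d + 1 ∧ n = b - d :=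
        ⟨(l+n-1)/2, (l-n-1)/2, by omega, by omega⟩
      obtain ⟨R, hR, hRp⟩ : ∃ R, X = 4*R + 4*(a+b) + 3 ∧ R % 2 = 0 :=
        ⟨(a+c+b+d+1)*(a-c+b-d), by rw [← hX]; ring,
          Int.even_iff.mp (Int.even_mul.mpr (by
            simp only [Int.even_iff]; omega))⟩
      have hab : (a+b) % 2 = 0 := by omega
      obtain ⟨e, rfl⟩ : ∃ e, a = 2*e - b := ⟨(a+b)/2, by omega⟩
      refine ⟨(2*e+1)*(2*e-2*b-1)*(4*c^2+4*d^2+4*d+1), ?_, by rw [D4_eq]; ring⟩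
      exact Odd.mul (Odd.mul (⟨e, by ring⟩ : Odd ((2*e+1))) ⟨e-b-1, by ring⟩)
        ⟨2*c^2+2*d^2+2*d, by ring⟩
  · -- 3c
    intro h1 h2
    rcases Int.emod_two_eq (k - m) with hC | hC
    · -- k-m even : k ≡ m [ZMOD 2] holds
      have hkm : k ≡ m [ZMOD 2] := show k % 2 = m % 2 by omega
      obtain ⟨X, hX⟩ : ∃ X, (2*k+2*l+1) * (2*m+2*n+1) = X := ⟨_, rfl⟩
      have h2' : ¬ (X % 8 = 3 % 8 ∨ X % 8 = (-3) % 8) := by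
        intro hor
        exact h2 ⟨hkm, by rw [hX]; exact hor⟩
      have hA : X % 8 ≠ 3 % 8 := fun hh => h2' (Or.inl hh)
      have hB : X % 8 ≠ (-3) % 8 := fun hh => h2' (Or.inr hh)
      obtain ⟨a, c, rfl, rfl⟩ : ∃ a c, k = a + c ∧ m = a - c :=
        ⟨(k+m)/2, (k-m)/2, by omega, by omega⟩
      rcases Int.emod_two_eq (l - n) with hD | hD
      · -- l-n even
        obtain ⟨b, d, rfl, rfl⟩ : ∃ b d, l = b + d ∧ n = b - d :=
          ⟨(l+n)/2, (l-n)/2, by omega, by omega⟩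
        have hcd : (c + d) % 2 = 0 := by
          rcases Int.emod_two_eq (a+b+c+d) with hu | hu
          · obtain ⟨w, rfl⟩ : ∃ w, d = 2*w - a - b - c := ⟨(a+b+c+d)/2, by omega⟩
            obtain ⟨W, hW⟩ : ∃ W, X = 16*W + 4*(a+b) + 1 :=
              ⟨w*(a+b-w), by rw [← hX]; ring⟩
            omega
          · obtain ⟨w, rfl⟩ : ∃ w, d = 2*w + 1 - a - b - c := ⟨(a+b+c+d-1)/2, by omega⟩
            obtain ⟨W, hW, hWp⟩ : ∃ W, X = 4*W + 4*(a+b) + 1 ∧ W % 2 = 1 :=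
              ⟨(2*w+1)*(2*(a+b)-2*w-1), by rw [← hX]; ring,
                Int.odd_iff.mp (Odd.mul (⟨w, by ring⟩ : Odd ((2*w+1))) ⟨a+b-w-1, by ring⟩)⟩
            omega
        obtain ⟨g, rfl⟩ : ∃ g, d = 2*g - c := ⟨(c+d)/2, by omega⟩
        exact ⟨(2*a+2*b+1)*(2*a-2*b-1)*(c^2-2*g*c+2*g^2), by rw [D4_eq]; ring⟩
      · -- l-n odd
        obtain ⟨b, d, rfl, rfl⟩ : ∃ b d, l = b + d + 1 ∧ n = b - d :=
          ⟨(l+n-1)/2, (l-n-1)/2, by omega, by omega⟩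
        obtain ⟨R, hR, hRp⟩ : ∃ R, X = 4*R + 4*(a+b) + 3 ∧ R % 2 = 0 :=
          ⟨(a+c+b+d+1)*(a-c+b-d), by rw [← hX]; ring,
            Int.even_iff.mp (Int.even_mul.mpr (by
              simp only [Int.even_iff]; omega))⟩
        have hab : (a+b) % 2 = 1 := by omega
        obtain ⟨e, rfl⟩ : ∃ e, a = 2*e + 1 - b := ⟨(a+b-1)/2, by omega⟩
        exact ⟨2*(e+1)*(e-b)*(4*c^2+4*d^2+4*d+1), by rw [D4_eq]; ring⟩
    · -- k-m odd
      rcases Int.emod_two_eq (l - n) with hD | hD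
      · -- l-n even
        obtain ⟨a, c, rfl, rfl⟩ : ∃ a c, k = a + c + 1 ∧ m = a - c :=
          ⟨(k+m-1)/2, (k-m-1)/2, by omega, by omega⟩
        obtain ⟨b, d, rfl, rfl⟩ : ∃ b d, l = b + d ∧ n = b - d :=
          ⟨(l+n)/2, (l-n)/2, by omega, by omega⟩
        rcases Int.emod_two_eq (a - b) with h3 | h3
        · obtain ⟨e, rfl⟩ : ∃ e, a = b + 2*e := ⟨(a-b)/2, by omega⟩
          exact ⟨e*(2*b+2*e+1)*(4*c^2+4*c+4*d^2+1), by rw [D4_eq]; ring⟩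
        · obtain ⟨e, rfl⟩ : ∃ e, a = b + 2*e + 1 := ⟨(a-b-1)/2, by omega⟩
          exact ⟨(b+e+1)*(2*e+1)*(4*c^2+4*c+4*d^2+1), by rw [D4_eq]; ring⟩
      · -- l-n odd : contradiction with h1
        exact absurd ⟨show (k-m) % 2 = 1 % 2 by omega, show (l-n) % 2 = 1 % 2 by omega⟩ h1
  · -- 4a
    intro hP
    obtain ⟨X, hX⟩ : ∃ X, (2*k+2*m+1) * (2*l+2*n+1) = X := ⟨_, rfl⟩
    have hP' : X % 8 = 3 % 8 ∨ X % 8 = (-3) % 8 := by rw [← hX]; exact hP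
    rcases Int.emod_two_eq (k + m) with hG | hG <;> rcases Int.emod_two_eq (l + n) with hH | hH
    · -- both even
      obtain ⟨g, c, rfl, rfl⟩ : ∃ g c, k = g + c ∧ m = g - c :=
        ⟨(k+m)/2, (k-m)/2, by omega, by omega⟩
      obtain ⟨h, d, rfl, rfl⟩ : ∃ h d, l = h + d ∧ n = h - d :=
        ⟨(l+n)/2, (l-n)/2, by omega, by omega⟩
      obtain ⟨W, hW⟩ : ∃ W, X = 16*W + 4*(g+h) + 1 := ⟨g*h, by rw [← hX]; ring⟩
      have hgh : (g+h) % 2 = 1 := by omega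
      obtain ⟨e, rfl⟩ : ∃ e, h = 2*e + 1 - g := ⟨(g+h-1)/2, by omega⟩
      refine ⟨(4*e+3)*(2*g-2*e-1)*(8*c^2-4*c+8*d^2-4*d+1), ?_, by rw [D4_eq]; ring⟩
      exact Odd.mul (Odd.mul (⟨2*e+1, by ring⟩ : Odd ((4*e+3))) ⟨g-e-1, by ring⟩)
        ⟨4*c^2-2*c+4*d^2-2*d, by ring⟩
    · -- G even, H odd
      obtain ⟨g, c, rfl, rfl⟩ : ∃ g c, k = g + c ∧ m = g - c :=
        ⟨(k+m)/2, (k-m)/2, by omega, by omega⟩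
      obtain ⟨h, d, rfl, rfl⟩ : ∃ h d, l = h + d + 1 ∧ n = h - d :=
        ⟨(l+n-1)/2, (l-n-1)/2, by omega, by omega⟩
      obtain ⟨W, hW⟩ : ∃ W, X = 8*W + 4*(g+h) + 3 := ⟨2*g*h+g, by rw [← hX]; ring⟩
      have hgh : (g+h) % 2 = 0 := by omega
      obtain ⟨e, rfl⟩ : ∃ e, h = 2*e - g := ⟨(g+h)/2, by omega⟩
      refine ⟨(2*e+1)*(4*g-4*e-1)*(8*c^2-4*c+8*d^2+4*d+1), ?_, by rw [D4_eq]; ring⟩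
      exact Odd.mul (Odd.mul (⟨e, by ring⟩ : Odd ((2*e+1))) ⟨2*g-2*e-1, by ring⟩)
        ⟨4*c^2-2*c+4*d^2+2*d, by ring⟩
    · -- G odd, H even
      obtain ⟨g, c, rfl, rfl⟩ : ∃ g c, k = g + c + 1 ∧ m = g - c :=
        ⟨(k+m-1)/2, (k-m-1)/2, by omega, by omega⟩
      obtain ⟨h, d, rfl, rfl⟩ : ∃ h d, l = h + d ∧ n = h - d :=
        ⟨(l+n)/2, (l-n)/2, by omega, by omega⟩
      obtain ⟨W, hW⟩ : ∃ W, X = 8*W + 4*(g+h) + 3 := ⟨2*g*h+h, by rw [← hX]; ring⟩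
      have hgh : (g+h) % 2 = 0 := by omega
      obtain ⟨e, rfl⟩ : ∃ e, h = 2*e - g := ⟨(g+h)/2, by omega⟩
      refine ⟨(2*e+1)*(4*g-4*e+1)*(8*c^2+4*c+8*d^2-4*d+1), ?_, by rw [D4_eq]; ring⟩
      exact Odd.mul (Odd.mul (⟨e, by ring⟩ : Odd ((2*e+1))) ⟨2*g-2*e, by ring⟩)
        ⟨4*c^2+2*c+4*d^2-2*d, by ring⟩
    · -- both odd
      obtain ⟨g, c, rfl, rfl⟩ : ∃ g c, k = g + c + 1 ∧ m = g - c :=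
        ⟨(k+m-1)/2, (k-m-1)/2, by omega, by omega⟩
      obtain ⟨h, d, rfl, rfl⟩ : ∃ h d, l = h + d + 1 ∧ n = h - d :=
        ⟨(l+n-1)/2, (l-n-1)/2, by omega, by omega⟩
      obtain ⟨W, hW⟩ : ∃ W, X = 8*W + 4*(g+h) + 1 := ⟨2*g*h+g+h+1, by rw [← hX]; ring⟩
      have hgh : (g+h) % 2 = 1 := by omega
      obtain ⟨e, rfl⟩ : ∃ e, h = 2*e + 1 - g := ⟨(g+h-1)/2, by omega⟩
      refine ⟨(4*e+5)*(2*g-2*e-1)*(8*c^2+4*c+8*d^2+4*d+1), ?_, by rw [D4_eq]; ring⟩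
      exact Odd.mul (Odd.mul (⟨2*e+2, by ring⟩ : Odd ((4*e+5))) ⟨g-e-1, by ring⟩)
        ⟨4*c^2+2*c+4*d^2+2*d, by ring⟩
  · -- 4b
    intro hP
    obtain ⟨X, hX⟩ : ∃ X, (2*k+2*m+1) * (2*l+2*n+1) = X := ⟨_, rfl⟩
    have hP' : X % 8 = 1 % 8 ∨ X % 8 = (-1) % 8 := by rw [← hX]; exact hP
    rcases Int.emod_two_eq (k + m) with hG | hG <;> rcases Int.emod_two_eq (l + n) with hH | hH
    · -- both even
      obtain ⟨g, c, rfl, rfl⟩ : ∃ g c, k = g + c ∧ m = g - c :=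
        ⟨(k+m)/2, (k-m)/2, by omega, by omega⟩
      obtain ⟨h, d, rfl, rfl⟩ : ∃ h d, l = h + d ∧ n = h - d :=
        ⟨(l+n)/2, (l-n)/2, by omega, by omega⟩
      obtain ⟨W, hW⟩ : ∃ W, X = 16*W + 4*(g+h) + 1 := ⟨g*h, by rw [← hX]; ring⟩
      have hgh : (g+h) % 2 = 0 := by omega
      obtain ⟨e, rfl⟩ : ∃ e, h = 2*e - g := ⟨(g+h)/2, by omega⟩
      exact ⟨(4*e+1)*(g-e)*(8*c^2-4*c+8*d^2-4*d+1), by rw [D4_eq]; ring⟩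
    · -- G even, H odd
      obtain ⟨g, c, rfl, rfl⟩ : ∃ g c, k = g + c ∧ m = g - c :=
        ⟨(k+m)/2, (k-m)/2, by omega, by omega⟩
      obtain ⟨h, d, rfl, rfl⟩ : ∃ h d, l = h + d + 1 ∧ n = h - d :=
        ⟨(l+n-1)/2, (l-n-1)/2, by omega, by omega⟩
      obtain ⟨W, hW⟩ : ∃ W, X = 8*W + 4*(g+h) + 3 := ⟨2*g*h+g, by rw [← hX]; ring⟩
      have hgh : (g+h) % 2 = 1 := by omega
      obtain ⟨e, rfl⟩ : ∃ e, h = 2*e + 1 - g := ⟨(g+h-1)/2, by omega⟩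
      exact ⟨(e+1)*(4*g-4*e-3)*(8*c^2-4*c+8*d^2+4*d+1), by rw [D4_eq]; ring⟩
    · -- G odd, H even
      obtain ⟨g, c, rfl, rfl⟩ : ∃ g c, k = g + c + 1 ∧ m = g - c :=
        ⟨(k+m-1)/2, (k-m-1)/2, by omega, by omega⟩
      obtain ⟨h, d, rfl, rfl⟩ : ∃ h d, l = h + d ∧ n = h - d :=
        ⟨(l+n)/2, (l-n)/2, by omega, by omega⟩
      obtain ⟨W, hW⟩ : ∃ W, X = 8*W + 4*(g+h) + 3 := ⟨2*g*h+h, by rw [← hX]; ring⟩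
      have hgh : (g+h) % 2 = 1 := by omega
      obtain ⟨e, rfl⟩ : ∃ e, h = 2*e + 1 - g := ⟨(g+h-1)/2, by omega⟩
      exact ⟨(e+1)*(4*g-4*e-1)*(8*c^2+4*c+8*d^2-4*d+1), by rw [D4_eq]; ring⟩
    · -- both odd
      obtain ⟨g, c, rfl, rfl⟩ : ∃ g c, k = g + c + 1 ∧ m = g - c :=
        ⟨(k+m-1)/2, (k-m-1)/2, by omega, by omega⟩
      obtain ⟨h, d, rfl, rfl⟩ : ∃ h d, l = h + d + 1 ∧ n = h - d :=
        ⟨(l+n-1)/2, (l-n-1)/2, by omega, by omega⟩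
      obtain ⟨W, hW⟩ : ∃ W, X = 8*W + 4*(g+h) + 1 := ⟨2*g*h+g+h+1, by rw [← hX]; ring⟩
      have hgh : (g+h) % 2 = 0 := by omega
      obtain ⟨e, rfl⟩ : ∃ e, h = 2*e - g := ⟨(g+h)/2, by omega⟩
      exact ⟨(4*e+3)*(g-e)*(8*c^2+4*c+8*d^2+4*d+1), by rw [D4_eq]; ring⟩
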